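/- Let K be a normalized kernel with moments m_j and let n = 2. The EQMOM moment map 𝓜 : ℝ⁵ → ℝ⁵, 𝓜(W)_j = w₁Δⱼ(u₁,σ) + w₂Δⱼ(u₂,σ) for j = 0,…,4, where W = (w₁,u₁,w₂,u₂,σ), is injective on the set Ω = {w₁ > 0, w₂ > 0, u₁ < u₂, σ > 0} if and only if the kernel moments satisfy m₄ ≥ 3 + (9/8)·m₃². -/

import Mathlib

open MeasureTheory Finset

noncomputable def Fg (a0 a1 A B c d s : ℝ) : ℝ :=
  (a0 * (B - (3*a1*s^2 + c*a0*s^3))^2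
    - 2*a1*((A - a0*s^2) * (B - (3*a1*s^2 + c*a0*s^3)))
    + (A - a0*s^2)^3) / (a0*A - a1^2 - a0^2*s^2)
  + (6*(s^2*(A - a0*s^2)) + (4*(c*a1)*s^3 + d*a0*s^4))

noncomputable def Dg (a0 a1 A B c d s : ℝ) : ℝ :=
  2*s*((2*a0^4*B + 4*a0^2*a1^3 - 6*a0^3*a1*A + 3*a0^3*a1^2*c*s - 3*a0^4*A*c*s + a0^5*c*s^3)^2
      + 8*a0^4*(a0*A - a1^2 - a0^2*s^2)^2
        *(2*(a0*A - a1^2 - a0^2*s^2) + a0^2*s^2*(d - 3 - 9/8*c^2)))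
  / (4*a0^5*(a0*A - a1^2 - a0^2*s^2)^2)

lemma Fg_hasDerivAt (a0 a1 A B c d s : ℝ) (ha0 : a0 ≠ 0)
    (hh : a0*A - a1^2 - a0^2*s^2 ≠ 0) :
    HasDerivAt (fun t => Fg a0 a1 A B c d t) (Dg a0 a1 A B c d s) s := by
  have h1 : HasDerivAt (fun t : ℝ => t^2) (2*s) s := by simpa using hasDerivAt_pow 2 s
  have h3 : HasDerivAt (fun t : ℝ => t^3) (3*s^2) s := by simpa using hasDerivAt_pow 3 s
  have h4 : HasDerivAt (fun t : ℝ => t^4) (4*s^3) s := by simpa using hasDerivAt_pow 4 s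
  have ha2 : HasDerivAt (fun t : ℝ => A - a0*t^2) (-(a0*(2*s))) s := (h1.const_mul a0).const_sub A
  have ha3 : HasDerivAt (fun t : ℝ => B - (3*a1*t^2 + c*a0*t^3))
      (-(3*a1*(2*s) + c*a0*(3*s^2))) s :=
    ((h1.const_mul (3*a1)).add (h3.const_mul (c*a0))).const_sub B
  have hden : HasDerivAt (fun t : ℝ => a0*A - a1^2 - a0^2*t^2) (-(a0^2*(2*s))) s :=
    (h1.const_mul (a0^2)).const_sub (a0*A - a1^2)
  have hnum := (((ha3.pow 2).const_mul a0).sub ((ha2.mul ha3).const_mul (2*a1))).add (ha2.pow 3)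
  have hq := hnum.div hden hh
  have hrest := ((h1.mul ha2).const_mul 6).add ((h3.const_mul (4*(c*a1))).add (h4.const_mul (d*a0)))
  have hfin := hq.add hrest
  refine HasDerivAt.congr_deriv hfin ?_
  rw [Dg]
  norm_num
  field_simp
  ring

lemma Dg_pos {a0 a1 A B c d s : ℝ} (ha0 : 0 < a0) (hs : 0 < s)
    (hh : 0 < a0*A - a1^2 - a0^2*s^2) (hcd : 3 + 9/8*c^2 ≤ d) :
    0 < Dg a0 a1 A B c d s := by
  rw [Dg]
  apply div_pos
  · have h2 : 0 < 2*(a0*A - a1^2 - a0^2*s^2) + a0^2*s^2*(d - 3 - 9/8*c^2) := by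
      nlinarith [sq_nonneg (a0*s)]
    have h3 : 0 < 8*a0^4*(a0*A - a1^2 - a0^2*s^2)^2
        *(2*(a0*A - a1^2 - a0^2*s^2) + a0^2*s^2*(d - 3 - 9/8*c^2)) := by positivity
    nlinarith [sq_nonneg (2*a0^4*B + 4*a0^2*a1^3 - 6*a0^3*a1*A + 3*a0^3*a1^2*c*s - 3*a0^4*A*c*s + a0^5*c*s^3)]
  · positivity

lemma Fg_inj {a0 a1 A B c d : ℝ} (ha0 : 0 < a0) (hcd : 3 + 9/8*c^2 ≤ d)
    {σ τ : ℝ} (hσ : 0 < σ) (hτ : 0 < τ)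
    (hhσ : 0 < a0*A - a1^2 - a0^2*σ^2) (hhτ : 0 < a0*A - a1^2 - a0^2*τ^2)
    (heq : Fg a0 a1 A B c d σ = Fg a0 a1 A B c d τ) : σ = τ := by
  set r := Real.sqrt (a0*A - a1^2) / a0 with hr
  have hH0 : 0 < a0*A - a1^2 := by nlinarith [sq_nonneg (a0*σ)]
  have hmem : ∀ x : ℝ, 0 < x → 0 < a0*A - a1^2 - a0^2*x^2 → x ∈ Set.Ioo 0 r := by
    intro x hx hhx
    refine ⟨hx, ?_⟩
    rw [hr, lt_div_iff₀ ha0]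
    rw [show x * a0 = a0 * x by ring]
    have : (a0*x)^2 < a0*A - a1^2 := by nlinarith
    nlinarith [Real.sq_sqrt hH0.le, Real.sqrt_nonneg (a0*A - a1^2), sq_nonneg (Real.sqrt (a0*A - a1^2) - a0*x)]
  have hpos : ∀ x ∈ Set.Ioo 0 r, 0 < a0*A - a1^2 - a0^2*x^2 := by
    intro x hx
    have hxr : a0 * x < Real.sqrt (a0*A - a1^2) := by
      have := hx.2; rw [hr, lt_div_iff₀ ha0] at this; linarith [this]
    have h1 : (a0*x)^2 < a0*A - a1^2 := by
      have h0 : 0 ≤ a0 * x := le_of_lt (mul_pos ha0 hx.1)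
      nlinarith [Real.sq_sqrt hH0.le]
    nlinarith
  have hmono : StrictMonoOn (fun t => Fg a0 a1 A B c d t) (Set.Ioo 0 r) := by
    apply strictMonoOn_of_deriv_pos (convex_Ioo 0 r)
    · intro x hx
      exact (Fg_hasDerivAt a0 a1 A B c d x ha0.ne' (hpos x hx).ne').continuousAt.continuousWithinAt
    · intro x hx
      rw [interior_Ioo] at hx
      rw [(Fg_hasDerivAt a0 a1 A B c d x ha0.ne' (hpos x hx).ne').deriv]
      exact Dg_pos ha0 hx.1 (hpos x hx) hcd
  exact hmono.injOn (hmem σ hσ hhσ) (hmem τ hτ hhτ) heq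

lemma ball_lemma (B c : ℝ) {s : ℝ} (hs : s ∈ Set.Ioo (0:ℝ) 1) :
    ∃ w1 u1 w2 u2 : ℝ,
      (0 < w1 ∧ 0 < w2 ∧ u1 < u2) ∧
      w1 + w2 = 1 ∧ w1*u1 + w2*u2 = 0 ∧
      w1*u1^2 + w2*u2^2 = 1 - s^2 ∧
      w1*u1^3 + w2*u2^3 = B - c*s^3 ∧
      w1*u1^4 + w2*u2^4 = (B - c*s^3)^2/(1-s^2) + (1-s^2)^2 := by
  have hepos : 0 < 1 - s^2 := by nlinarith [hs.1, hs.2]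
  set e := 1 - s^2 with hedef
  set p := (B - c*s^3)/e with hpdef
  have hpe : p * e = B - c*s^3 := by rw [hpdef]; field_simp
  have hDpos : 0 < p^2 + 4*e := by positivity
  set δD := Real.sqrt (p^2 + 4*e) with hδDdef
  have hδD2 : δD^2 = p^2 + 4*e := Real.sq_sqrt hDpos.le
  have hδDpos : 0 < δD := Real.sqrt_pos.mpr hDpos
  have h2δD : (2*δD) ≠ 0 := by positivity
  have hpδ : p < δD := by nlinarith [hδD2, hepos, hδDpos]
  have hmpδ : -δD < p := by nlinarith [hδD2, hepos, hδDpos]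
  refine ⟨(p+δD)/(2*δD), (p-δD)/2, (δD-p)/(2*δD), (p+δD)/2, ⟨?_, ?_, ?_⟩, ?_, ?_, ?_, ?_, ?_⟩
  · apply div_pos (by linarith) (by linarith)
  · apply div_pos (by linarith) (by linarith)
  · linarith
  · rw [← add_div, show p + δD + (δD - p) = 2*δD by ring]
    exact div_self h2δD
  · rw [div_mul_eq_mul_div, div_mul_eq_mul_div, ← add_div,
      show (p+δD)*((p-δD)/2) + (δD-p)*((p+δD)/2) = 2*δD*0 by ring,
      mul_div_cancel_left₀ _ h2δD]
  · rw [div_mul_eq_mul_div, div_mul_eq_mul_div, ← add_div,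
      show (p+δD)*((p-δD)/2)^2 + (δD-p)*((p+δD)/2)^2 = 2*δD*e by
        linear_combination (δD/2)*hδD2,
      mul_div_cancel_left₀ _ h2δD]
  · rw [div_mul_eq_mul_div, div_mul_eq_mul_div, ← add_div,
      show (p+δD)*((p-δD)/2)^3 + (δD-p)*((p+δD)/2)^3 = 2*δD*(p*e) by
        linear_combination (p*δD/2)*hδD2,
      mul_div_cancel_left₀ _ h2δD, hpe]
  · rw [div_mul_eq_mul_div, div_mul_eq_mul_div, ← add_div,
      show (p+δD)*((p-δD)/2)^4 + (δD-p)*((p+δD)/2)^4 = 2*δD*((p^2+e)*e) by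
        linear_combination (δD*(δD^2 + 3*p^2 + 4*e)/8)*hδD2,
      mul_div_cancel_left₀ _ h2δD,
      show (B - c*s^3) = p*e from hpe.symm]
    field_simp

lemma Fg_fiber (B c d : ℝ) {s : ℝ} (hs : s ∈ Set.Ioo (0:ℝ) 1) :
    Fg 1 0 1 B c d s = (B - c*s^3)^2/(1-s^2) + (1-s^2)^2 + 6*s^2*(1-s^2) + d*s^4 := by
  have hepos : 0 < 1 - s^2 := by nlinarith [hs.1, hs.2]
  rw [Fg, show (1:ℝ)*1 - 0^2 - 1^2*s^2 = 1 - s^2 by ring]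
  field_simp
  ring

lemma Dg_neg_at (B c d ε δ s0 : ℝ) (hε : 0 < ε) (hεd : ε = 3 + 9/8*c^2 - d)
    (hδpos : 0 < δ) (hδ4 : δ ≤ 1/4) (hδε : δ ≤ ε/8)
    (hs0pos : 0 < s0) (hs0sq : s0^2 = 1 - δ)
    (hB : B = c*s0^3 + 3/2*(c*s0*(1-s0^2))) :
    Dg 1 0 1 B c d s0 < 0 := by
  rw [Dg]
  apply div_neg_of_neg_of_pos
  · rw [show (2*(1:ℝ)^4*B + 4*1^2*0^3 - 6*1^3*0*1 + 3*1^3*0^2*c*s0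
        - 3*1^4*1*c*s0 + 1^5*c*s0^3) = 0 by rw [hB]; ring]
    rw [show d - 3 - 9/8*c^2 = -ε by rw [hεd]; ring, hs0sq]
    have hfac : 2*(1-δ)*ε - 4*δ > 0 := by nlinarith [hε, hδ4, hδε]
    nlinarith [hs0pos, hδpos, hε, hfac, mul_pos hs0pos (mul_pos (mul_pos hδpos hδpos) hfac)]
  · rw [hs0sq]
    nlinarith [pow_pos hδpos 2]

lemma Dg_pos_at (B c d ε s1 : ℝ) (hε : 0 < ε) (hεd : ε = 3 + 9/8*c^2 - d)
    (hs1pos : 0 < s1) (hs1sqval : s1^2*(2+2*ε) = 1) :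
    0 < Dg 1 0 1 B c d s1 := by
  have hs1sqpos : 0 < s1^2 := pow_pos hs1pos 2
  have hs1sqlt : s1^2 < 1/2 := by nlinarith
  rw [Dg]
  apply div_pos
  · rw [show d - 3 - 9/8*c^2 = -ε by rw [hεd]; ring]
    have hh1 : 0 < (1*1 - 0^2 - 1^2*s1^2 : ℝ) := by nlinarith
    have hinner : 0 < 2*(1*1 - 0^2 - 1^2*s1^2) + 1^2*s1^2*(-ε) := by nlinarith
    nlinarith [hs1pos, hinner, hh1,
      sq_nonneg (2*(1:ℝ)^4*B + 4*1^2*0^3 - 6*1^3*0*1 + 3*1^3*0^2*c*s1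
        - 3*1^4*1*c*s1 + 1^5*c*s1^3),
      mul_pos hs1pos (mul_pos (mul_pos hh1 hh1) hinner)]
  · nlinarith [hs1sqlt, hs1sqpos]

lemma deriv_nonneg_of_strictMonoOn {f : ℝ → ℝ} {a b x d' : ℝ} (hx : x ∈ Set.Ioo a b)
    (hm : StrictMonoOn f (Set.Ioo a b)) (hd : HasDerivAt f d' x) : 0 ≤ d' := by
  have ht : Filter.Tendsto (slope f x) (nhdsWithin x {x}ᶜ) (nhds d') :=
    hasDerivAt_iff_tendsto_slope.mp hd
  have ht2 : Filter.Tendsto (slope f x) (nhdsWithin x (Set.Ioi x)) (nhds d') :=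
    ht.mono_left (nhdsWithin_mono x (fun y hy => ne_of_gt hy))
  refine ge_of_tendsto ht2 ?_
  filter_upwards [Ioo_mem_nhdsGT_of_mem ⟨le_refl x, hx.2⟩] with y hy
  have hylt : f x < f y := hm hx ⟨lt_trans hx.1 hy.1, hy.2⟩ hy.1
  rw [slope_def_field]
  apply div_nonneg (by linarith) (by linarith [hy.1])

lemma deriv_nonpos_of_strictAntiOn {f : ℝ → ℝ} {a b x d' : ℝ} (hx : x ∈ Set.Ioo a b)
    (hm : StrictAntiOn f (Set.Ioo a b)) (hd : HasDerivAt f d' x) : d' ≤ 0 := by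
  have ht : Filter.Tendsto (slope f x) (nhdsWithin x {x}ᶜ) (nhds d') :=
    hasDerivAt_iff_tendsto_slope.mp hd
  have ht2 : Filter.Tendsto (slope f x) (nhdsWithin x (Set.Ioi x)) (nhds d') :=
    ht.mono_left (nhdsWithin_mono x (fun y hy => ne_of_gt hy))
  refine le_of_tendsto ht2 ?_
  filter_upwards [Ioo_mem_nhdsGT_of_mem ⟨le_refl x, hx.2⟩] with y hy
  have hylt : f y < f x := hm hx ⟨lt_trans hx.1 hy.1, hy.2⟩ hy.1
  rw [slope_def_field]
  apply div_nonpos_of_nonpos_of_nonneg (by linarith) (by linarith [hy.1])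

lemma node_unique {w1 u1 w2 u2 v1 x1 v2 x2 : ℝ}
    (hw1 : 0 < w1) (hw2 : 0 < w2) (hv1 : 0 < v1) (hv2 : 0 < v2)
    (hu : u1 < u2) (hx : x1 < x2)
    (e0 : w1 + w2 = v1 + v2) (e1 : w1*u1 + w2*u2 = v1*x1 + v2*x2)
    (e2 : w1*u1^2 + w2*u2^2 = v1*x1^2 + v2*x2^2)
    (e3 : w1*u1^3 + w2*u2^3 = v1*x1^3 + v2*x2^3) :
    w1 = v1 ∧ u1 = x1 ∧ w2 = v2 ∧ u2 = x2 := by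
  set H := w1*w2*(u2-u1)^2 with hH
  have hHpos : 0 < H := by
    apply mul_pos (mul_pos hw1 hw2) (pow_pos (sub_pos.mpr hu) 2)
  have hH' : H = v1*v2*(x2-x1)^2 := by
    have h1 : (w1+w2)*(w1*u1^2+w2*u2^2) - (w1*u1+w2*u2)^2 = w1*w2*(u2-u1)^2 := by ring
    have h2 : (v1+v2)*(v1*x1^2+v2*x2^2) - (v1*x1+v2*x2)^2 = v1*v2*(x2-x1)^2 := by ring
    rw [hH, ← h1, e0, e1, e2, h2]
  have hsum : u1 + u2 = x1 + x2 := by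
    have hl : H * (u1 + u2) = (w1+w2)*(w1*u1^3+w2*u2^3) - (w1*u1+w2*u2)*(w1*u1^2+w2*u2^2) := by
      rw [hH]; ring
    have hr : H * (x1 + x2) = (v1+v2)*(v1*x1^3+v2*x2^3) - (v1*x1+v2*x2)*(v1*x1^2+v2*x2^2) := by
      rw [hH']; ring
    have h3 : H * (u1 + u2) = H * (x1 + x2) := by rw [hl, hr, e0, e1, e2, e3]
    exact mul_left_cancel₀ hHpos.ne' h3
  have hprod : u1 * u2 = x1 * x2 := by
    have hl : H * (u1 * u2) = (w1*u1+w2*u2)*(w1*u1^3+w2*u2^3) - (w1*u1^2+w2*u2^2)^2 := by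
      rw [hH]; ring
    have hr : H * (x1 * x2) = (v1*x1+v2*x2)*(v1*x1^3+v2*x2^3) - (v1*x1^2+v2*x2^2)^2 := by
      rw [hH']; ring
    have h3 : H * (u1 * u2) = H * (x1 * x2) := by rw [hl, hr, e1, e2, e3]
    exact mul_left_cancel₀ hHpos.ne' h3
  have hdiff : u2 - u1 = x2 - x1 := by
    have h1 : (u2 - u1)^2 = (x2 - x1)^2 := by linear_combination (u1+u2+x1+x2)*hsum - 4*hprod
    nlinarith [sub_pos.mpr hu, sub_pos.mpr hx]
  have hu1 : u1 = x1 := by linarith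
  have hu2 : u2 = x2 := by linarith
  subst hu1; subst hu2
  have hw1v : w1 = v1 := by
    have h5 : (w1 - v1) * (u1 - u2) = 0 := by linear_combination e1 - u2 * e0
    rcases mul_eq_zero.mp h5 with h | h
    · linarith
    · linarith [hu]
  exact ⟨hw1v, rfl, by linarith, rfl⟩

set_option maxHeartbeats 1000000 in
/-- For a normalized kernel `K` with moments `m_j`, the two-node
EQMOM moment map `𝓜(w₁,u₁,w₂,u₂,σ)_j = w₁Δⱼ(u₁,σ) + w₂Δⱼ(u₂,σ)`, `j = 0,…,4`, is
injective on `Ω = {w₁ > 0, w₂ > 0, u₁ < u₂, σ > 0}` iff `m₄ ≥ 3 + (9/8)m₃²`. -/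
theorem two_node_eqmom_injective_iff
    (K : ℝ → ℝ) (hKmeas : Measurable K) (hKnonneg : ∀ ξ, 0 ≤ K ξ)
    (hKint : ∀ j : ℕ, Integrable (fun ξ => |ξ| ^ j * K ξ))
    (m : ℕ → ℝ) (hm : ∀ j, m j = ∫ ξ, ξ ^ j * K ξ)
    (hm0 : m 0 = 1) (hm1 : m 1 = 0) (hm2 : m 2 = 1)
    (Δ : ℕ → ℝ → ℝ → ℝ)
    (hΔ : ∀ j u σ, Δ j u σ = ∫ ξ, ξ ^ j * (σ⁻¹ * K ((ξ - u) / σ))) :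
    Set.InjOn
      (fun W : ℝ × ℝ × ℝ × ℝ × ℝ => fun j : Fin 5 =>
        W.1 * Δ (j : ℕ) W.2.1 W.2.2.2.2 + W.2.2.1 * Δ (j : ℕ) W.2.2.2.1 W.2.2.2.2)
      {W : ℝ × ℝ × ℝ × ℝ × ℝ |
        0 < W.1 ∧ 0 < W.2.2.1 ∧ W.2.1 < W.2.2.2.1 ∧ 0 < W.2.2.2.2} ↔
    3 + 9 / 8 * (m 3) ^ 2 ≤ m 4 := by
  -- The moment expansion of Δ
  have hDelta : ∀ (j : ℕ) (u σ : ℝ), 0 < σ →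
      Δ j u σ = ∑ k ∈ range (j+1), u^k * σ^(j-k) * (j.choose k : ℝ) * m (j-k) := by
    have hIntPow : ∀ k : ℕ, Integrable (fun t : ℝ => t^k * K t) := by
      intro k
      refine (hKint k).mono ?_ ?_
      · exact ((continuous_pow k).measurable.mul hKmeas).aestronglyMeasurable
      · filter_upwards with t
        simp only [Real.norm_eq_abs, abs_mul, abs_pow, abs_abs]
        exact le_refl _
    intro j u σ hσ
    rw [hΔ]
    have hfun : (fun ξ : ℝ => ξ^j * (σ⁻¹ * K ((ξ - u)/σ)))
        = fun ξ => σ⁻¹ * ((fun t => (u + σ*t)^j * K t) ((ξ - u)/σ)) := by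
      funext ξ
      have hξ : u + σ * ((ξ - u)/σ) = ξ := by field_simp; ring
      simp only [hξ]; ring
    set g : ℝ → ℝ := fun t => (u + σ*t)^j * K t with hg
    rw [hfun, integral_const_mul]
    have hsub : (∫ ξ : ℝ, g ((ξ - u)/σ)) = |σ| • ∫ t, g t := by
      calc (∫ ξ : ℝ, g ((ξ - u)/σ))
          = ∫ ξ : ℝ, (fun x => g (x/σ)) (ξ - u) := rfl
        _ = ∫ x : ℝ, g (x/σ) := integral_sub_right_eq_self (fun x => g (x/σ)) u
        _ = |σ| • ∫ t, g t := Measure.integral_comp_div g σ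
    rw [hsub, abs_of_pos hσ, smul_eq_mul, ← mul_assoc, inv_mul_cancel₀ hσ.ne', one_mul]
    have hexp : ∀ t : ℝ, (u + σ*t)^j * K t
        = ∑ k ∈ range (j+1), (u^k * σ^(j-k) * (j.choose k : ℝ)) * (t^(j-k) * K t) := by
      intro t
      rw [add_pow, Finset.sum_mul]
      refine Finset.sum_congr rfl fun k _ => by rw [mul_pow]; ring
    rw [show g = fun t => ∑ k ∈ range (j+1), (u^k * σ^(j-k) * (j.choose k : ℝ)) * (t^(j-k) * K t)
        from funext hexp]
    rw [integral_finset_sum _ (fun k _ => (hIntPow (j-k)).const_mul _)]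
    refine Finset.sum_congr rfl fun k _ => ?_
    rw [integral_const_mul, ← hm (j-k)]
  have hΔ0 : ∀ (u σ : ℝ), 0 < σ → Δ 0 u σ = 1 := by
    intro u σ hσ; rw [hDelta 0 u σ hσ]
    simp [hm0]
  have hΔ1 : ∀ (u σ : ℝ), 0 < σ → Δ 1 u σ = u := by
    intro u σ hσ; rw [hDelta 1 u σ hσ]
    simp [Finset.sum_range_succ, hm0, hm1]
  have hΔ2 : ∀ (u σ : ℝ), 0 < σ → Δ 2 u σ = u^2 + σ^2 := by
    intro u σ hσ; rw [hDelta 2 u σ hσ]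
    simp [Finset.sum_range_succ, hm0, hm1, hm2, Nat.choose]
    try ring
  have hΔ3 : ∀ (u σ : ℝ), 0 < σ → Δ 3 u σ = u^3 + 3*u*σ^2 + m 3*σ^3 := by
    intro u σ hσ; rw [hDelta 3 u σ hσ]
    simp [Finset.sum_range_succ, hm0, hm1, hm2, Nat.choose]
    try ring
  have hΔ4 : ∀ (u σ : ℝ), 0 < σ → Δ 4 u σ = u^4 + 6*u^2*σ^2 + 4*u*(m 3)*σ^3 + m 4*σ^4 := by
    intro u σ hσ; rw [hDelta 4 u σ hσ]
    simp [Finset.sum_range_succ, hm0, hm1, hm2, Nat.choose]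
    try ring
  constructor
  · -- injectivity → moment condition
    intro hinj
    by_contra hnot
    push_neg at hnot
    set ε := 3 + 9/8*(m 3)^2 - m 4 with hεdef
    have hε : 0 < ε := by rw [hεdef]; linarith
    set δ := min (1/4 : ℝ) (ε/8) with hδdef
    have hδpos : 0 < δ := lt_min (by norm_num) (by linarith)
    have hδ4 : δ ≤ 1/4 := min_le_left _ _
    have hδε : δ ≤ ε/8 := min_le_right _ _
    set s0 := Real.sqrt (1 - δ) with hs0def
    have h1δ : (0:ℝ) < 1 - δ := by linarith
    have hs0sq : s0^2 = 1 - δ := Real.sq_sqrt h1δ.le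
    have hs0pos : 0 < s0 := Real.sqrt_pos.mpr h1δ
    have hs0lt1 : s0 < 1 := by nlinarith [hs0sq, hδpos, hs0pos]
    set B := (m 3)*s0^3 + 3/2*((m 3)*s0*(1 - s0^2)) with hBdef
    have hs1sqpos : (0:ℝ) < 1/(2 + 2*ε) := by positivity
    set s1 := Real.sqrt (1/(2 + 2*ε)) with hs1def
    have hs1sq : s1^2 = 1/(2 + 2*ε) := Real.sq_sqrt hs1sqpos.le
    have hs1pos : 0 < s1 := Real.sqrt_pos.mpr hs1sqpos
    have hs1sqval : s1^2*(2 + 2*ε) = 1 := by rw [hs1sq]; field_simp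
    have hs1lt1 : s1 < 1 := by nlinarith [hs1sq, hs1pos, hε, hs1sqval]
    have hFinj : Set.InjOn (fun s => Fg 1 0 1 B (m 3) (m 4) s) (Set.Ioo 0 1) := by
      intro s hs t ht hFst
      obtain ⟨w1, u1, w2, u2, ⟨hw1, hw2, hu⟩, p0, p1, p2, p3, p4⟩ := ball_lemma B (m 3) hs
      obtain ⟨v1, x1, v2, x2, ⟨hv1, hv2, hx⟩, q0, q1, q2, q3, q4⟩ := ball_lemma B (m 3) ht
      have hmain : (fun j : Fin 5 => w1 * Δ (j:ℕ) u1 s + w2 * Δ (j:ℕ) u2 s)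
          = (fun j : Fin 5 => v1 * Δ (j:ℕ) x1 t + v2 * Δ (j:ℕ) x2 t) := by
        have hFst' : (B - m 3*s^3)^2/(1-s^2) + (1-s^2)^2 + 6*s^2*(1-s^2) + m 4*s^4
            = (B - m 3*t^3)^2/(1-t^2) + (1-t^2)^2 + 6*t^2*(1-t^2) + m 4*t^4 := by
          rw [← Fg_fiber B (m 3) (m 4) hs, ← Fg_fiber B (m 3) (m 4) ht]; exact hFst
        funext j
        fin_cases j
        · show w1 * Δ 0 u1 s + w2 * Δ 0 u2 s = v1 * Δ 0 x1 t + v2 * Δ 0 x2 t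
          rw [hΔ0 u1 s hs.1, hΔ0 u2 s hs.1, hΔ0 x1 t ht.1, hΔ0 x2 t ht.1]
          linarith
        · show w1 * Δ 1 u1 s + w2 * Δ 1 u2 s = v1 * Δ 1 x1 t + v2 * Δ 1 x2 t
          rw [hΔ1 u1 s hs.1, hΔ1 u2 s hs.1, hΔ1 x1 t ht.1, hΔ1 x2 t ht.1]
          linarith
        · show w1 * Δ 2 u1 s + w2 * Δ 2 u2 s = v1 * Δ 2 x1 t + v2 * Δ 2 x2 t
          rw [hΔ2 u1 s hs.1, hΔ2 u2 s hs.1, hΔ2 x1 t ht.1, hΔ2 x2 t ht.1]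
          linear_combination p2 + s^2*p0 - q2 - t^2*q0
        · show w1 * Δ 3 u1 s + w2 * Δ 3 u2 s = v1 * Δ 3 x1 t + v2 * Δ 3 x2 t
          rw [hΔ3 u1 s hs.1, hΔ3 u2 s hs.1, hΔ3 x1 t ht.1, hΔ3 x2 t ht.1]
          linear_combination p3 + 3*s^2*p1 + m 3*s^3*p0 - q3 - 3*t^2*q1 - m 3*t^3*q0
        · show w1 * Δ 4 u1 s + w2 * Δ 4 u2 s = v1 * Δ 4 x1 t + v2 * Δ 4 x2 t
          rw [hΔ4 u1 s hs.1, hΔ4 u2 s hs.1, hΔ4 x1 t ht.1, hΔ4 x2 t ht.1]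
          linear_combination p4 + 6*s^2*p2 + 4*(m 3)*s^3*p1 + m 4*s^4*p0
            - q4 - 6*t^2*q2 - 4*(m 3)*t^3*q1 - m 4*t^4*q0 + hFst'
      have htup : (w1, u1, w2, u2, s) = (v1, x1, v2, x2, t) :=
        hinj ⟨hw1, hw2, hu, hs.1⟩ ⟨hv1, hv2, hx, ht.1⟩ hmain
      exact congrArg (fun W : ℝ × ℝ × ℝ × ℝ × ℝ => W.2.2.2.2) htup
    have hFcont : ContinuousOn (fun s => Fg 1 0 1 B (m 3) (m 4) s) (Set.Ioo 0 1) := by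
      intro x hx
      have hepos : 0 < 1 - x^2 := by nlinarith [hx.1, hx.2]
      have hne : (1:ℝ)*1 - 0^2 - 1^2*x^2 ≠ 0 := by
        have hpos : (0:ℝ) < 1*1 - 0^2 - 1^2*x^2 := by nlinarith
        exact hpos.ne'
      exact (Fg_hasDerivAt 1 0 1 B (m 3) (m 4) x one_ne_zero hne).continuousAt.continuousWithinAt
    rcases hFcont.strictMonoOn_of_injOn_Ioo zero_lt_one hFinj with hmono | hanti
    · have hs0mem : s0 ∈ Set.Ioo (0:ℝ) 1 := ⟨hs0pos, hs0lt1⟩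
      have hne0 : (1:ℝ)*1 - 0^2 - 1^2*s0^2 ≠ 0 := by
        have hpos : (0:ℝ) < 1*1 - 0^2 - 1^2*s0^2 := by rw [hs0sq]; nlinarith [hδpos]
        exact hpos.ne'
      have hge := deriv_nonneg_of_strictMonoOn hs0mem hmono
        (Fg_hasDerivAt 1 0 1 B (m 3) (m 4) s0 one_ne_zero hne0)
      have hlt := Dg_neg_at B (m 3) (m 4) ε δ s0 hε hεdef hδpos hδ4 hδε hs0pos hs0sq hBdef
      linarith
    · have hs1mem : s1 ∈ Set.Ioo (0:ℝ) 1 := ⟨hs1pos, hs1lt1⟩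
      have hne1 : (1:ℝ)*1 - 0^2 - 1^2*s1^2 ≠ 0 := by
        have h2 : s1^2 < 1/2 := by nlinarith [hs1sqval, hε, pow_pos hs1pos 2]
        have hpos : (0:ℝ) < 1*1 - 0^2 - 1^2*s1^2 := by nlinarith
        exact hpos.ne'
      have hle := deriv_nonpos_of_strictAntiOn hs1mem hanti
        (Fg_hasDerivAt 1 0 1 B (m 3) (m 4) s1 one_ne_zero hne1)
      have hgt := Dg_pos_at B (m 3) (m 4) ε s1 hε hεdef hs1pos hs1sqval
      linarith
  · -- moment condition → injectivity
    intro hd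
    rintro ⟨w1, u1, w2, u2, σ⟩ hW ⟨v1, x1, v2, x2, τ⟩ hV hEq
    obtain ⟨hw1, hw2, hu, hσ⟩ := hW
    obtain ⟨hv1, hv2, hx, hτ⟩ := hV
    have E : ∀ (n : ℕ), n < 5 → w1 * Δ n u1 σ + w2 * Δ n u2 σ = v1 * Δ n x1 τ + v2 * Δ n x2 τ :=
      fun n hn => congrFun hEq ⟨n, hn⟩
    have e0r := E 0 (by norm_num)
    rw [hΔ0 u1 σ hσ, hΔ0 u2 σ hσ, hΔ0 x1 τ hτ, hΔ0 x2 τ hτ] at e0r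
    have E0 : w1 + w2 = v1 + v2 := by linarith
    have E1 : w1*u1 + w2*u2 = v1*x1 + v2*x2 := by
      have := E 1 (by norm_num)
      rw [hΔ1 u1 σ hσ, hΔ1 u2 σ hσ, hΔ1 x1 τ hτ, hΔ1 x2 τ hτ] at this
      exact this
    have e2 := E 2 (by norm_num)
    rw [hΔ2 u1 σ hσ, hΔ2 u2 σ hσ, hΔ2 x1 τ hτ, hΔ2 x2 τ hτ] at e2
    have e3 := E 3 (by norm_num)
    rw [hΔ3 u1 σ hσ, hΔ3 u2 σ hσ, hΔ3 x1 τ hτ, hΔ3 x2 τ hτ] at e3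
    have e4 := E 4 (by norm_num)
    rw [hΔ4 u1 σ hσ, hΔ4 u2 σ hσ, hΔ4 x1 τ hτ, hΔ4 x2 τ hτ] at e4
    set a0 := w1 + w2 with ha0k
    set a1 := w1*u1 + w2*u2 with ha1k
    set A := w1 * (u1^2 + σ^2) + w2 * (u2^2 + σ^2) with hAk
    set B := w1 * (u1^3 + 3*u1*σ^2 + m 3*σ^3) + w2 * (u2^3 + 3*u2*σ^2 + m 3*σ^3) with hBk
    have ha0 : 0 < a0 := by rw [ha0k]; linarith
    have hhσ : 0 < a0*A - a1^2 - a0^2*σ^2 := by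
      have hid : a0*A - a1^2 - a0^2*σ^2 = w1*w2*(u2-u1)^2 := by
        rw [ha0k, ha1k, hAk]; ring
      rw [hid]
      exact mul_pos (mul_pos hw1 hw2) (pow_pos (sub_pos.mpr hu) 2)
    have hhτ : 0 < a0*A - a1^2 - a0^2*τ^2 := by
      have hid : a0*A - a1^2 - a0^2*τ^2 = v1*v2*(x2-x1)^2 := by
        rw [E0, E1, e2]; ring
      rw [hid]
      exact mul_pos (mul_pos hv1 hv2) (pow_pos (sub_pos.mpr hx) 2)
    have hFσ : Fg a0 a1 A B (m 3) (m 4) σ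
        = w1 * (u1^4 + 6*u1^2*σ^2 + 4*u1*(m 3)*σ^3 + m 4*σ^4)
          + w2 * (u2^4 + 6*u2^2*σ^2 + 4*u2*(m 3)*σ^3 + m 4*σ^4) := by
      have hne : a0*A - a1^2 - a0^2*σ^2 ≠ 0 := hhσ.ne'
      rw [Fg, div_add' _ _ _ hne, div_eq_iff hne, ha0k, ha1k, hAk, hBk]
      ring
    have hFτ : Fg a0 a1 A B (m 3) (m 4) τ
        = v1 * (x1^4 + 6*x1^2*τ^2 + 4*x1*(m 3)*τ^3 + m 4*τ^4)
          + v2 * (x2^4 + 6*x2^2*τ^2 + 4*x2*(m 3)*τ^3 + m 4*τ^4) := by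
      have hne : a0*A - a1^2 - a0^2*τ^2 ≠ 0 := hhτ.ne'
      rw [Fg, div_add' _ _ _ hne, div_eq_iff hne, E0, E1, e2, e3]
      ring
    have hFeq : Fg a0 a1 A B (m 3) (m 4) σ = Fg a0 a1 A B (m 3) (m 4) τ := by
      rw [hFσ, hFτ]; exact e4
    have hστ : σ = τ := Fg_inj ha0 hd hσ hτ hhσ hhτ hFeq
    subst hστ
    have S2eq : w1*u1^2 + w2*u2^2 = v1*x1^2 + v2*x2^2 := by
      have h2 := hAk.symm.trans e2
      linear_combination h2 - σ^2 * E0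
    have S3eq : w1*u1^3 + w2*u2^3 = v1*x1^3 + v2*x2^3 := by
      have h3 := hBk.symm.trans e3
      linear_combination h3 - 3*σ^2 * E1 - (m 3)*σ^3 * E0
    obtain ⟨q1, q2, q3, q4⟩ := node_unique hw1 hw2 hv1 hv2 hu hx E0 E1 S2eq S3eq
    simp only [Prod.mk.injEq]
    exact ⟨q1, q2, q3, q4, trivial⟩
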